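/- Let P ⊆ [0, π] × (−1/4, 1/4) be a compact connected subset of ℝ² such that P ∩ ({0} × ℝ) = {(0,0)}, P ∩ ({π} × ℝ) = {(π, 0)}, and every continuous map γ : [0,1] → P is constant. For k ∈ ℤ set P_k = P + (kπ, 0), and let P̃ = ⋃_{k∈ℤ} P_k. Then P̃ is an unbounded connected subset of ℝ × (−1/4, 1/4) containing (0,0), and every continuous map γ : [0,1] → P̃ is constant, i.e. P̃ contains no non-trivial paths. -/
import Mathlib


open Set

/-- if P ⊆ [0,π] × (−1/4,1/4) is a compact connected set meeting {λ=0} only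
at (0,0) and {λ=π} only at (π,0), containing no non-trivial paths, then the union P̃ of the
translates P + (kπ, 0), k ∈ ℤ, is an unbounded connected subset of ℝ × (−1/4,1/4) containing
(0,0) and containing no non-trivial paths. -/
theorem stmt11 (P : Set (ℝ × ℝ))
    (hPsub : P ⊆ Icc 0 Real.pi ×ˢ Ioo (-(1 / 4) : ℝ) (1 / 4))
    (hPcomp : IsCompact P) (hPconn : IsConnected P)
    (hP0 : P ∩ {p : ℝ × ℝ | p.1 = 0} = {((0 : ℝ), (0 : ℝ))})
    (hPπ : P ∩ {p : ℝ × ℝ | p.1 = Real.pi} = {(Real.pi, (0 : ℝ))})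
    (hPnopath : ∀ γ : Set.Icc (0 : ℝ) 1 → ℝ × ℝ, Continuous γ → (∀ t, γ t ∈ P) →
      ∀ s t : Set.Icc (0 : ℝ) 1, γ s = γ t)
    (Ptil : Set (ℝ × ℝ))
    (hPtil : Ptil = ⋃ k : ℤ, (fun p : ℝ × ℝ => (p.1 + (k : ℝ) * Real.pi, p.2)) '' P) :
    Ptil ⊆ univ ×ˢ Ioo (-(1 / 4) : ℝ) (1 / 4) ∧
    ¬ Bornology.IsBounded Ptil ∧
    IsConnected Ptil ∧
    ((0 : ℝ), (0 : ℝ)) ∈ Ptil ∧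
    (∀ γ : Set.Icc (0 : ℝ) 1 → ℝ × ℝ, Continuous γ → (∀ t, γ t ∈ Ptil) →
      ∀ s t : Set.Icc (0 : ℝ) 1, γ s = γ t) := by
  have hπ : (0:ℝ) < Real.pi := Real.pi_pos
  have h00 : ((0:ℝ),(0:ℝ)) ∈ P := by
    have h : ((0:ℝ),(0:ℝ)) ∈ P ∩ {p : ℝ×ℝ | p.1 = 0} := by rw [hP0]; exact rfl
    exact h.1
  have hπP : ((Real.pi : ℝ), (0:ℝ)) ∈ P := by
    have h : ((Real.pi : ℝ),(0:ℝ)) ∈ P ∩ {p : ℝ×ℝ | p.1 = Real.pi} := by rw [hPπ]; exact rfl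
    exact h.1
  have hTmem : ∀ k : ℤ, ∀ q ∈ P, ((q.1 + (k:ℝ)*Real.pi, q.2)) ∈ Ptil := by
    intro k q hq
    rw [hPtil]
    exact mem_iUnion.2 ⟨k, ⟨q, hq, rfl⟩⟩
  have hjunc : ∀ k : ℤ, (((k:ℝ)*Real.pi, (0:ℝ))) ∈ Ptil := by
    intro k
    have := hTmem k _ h00
    simpa using this
  have h0til : ((0:ℝ),(0:ℝ)) ∈ Ptil := by simpa using hjunc 0
  have hbounds : ∀ k : ℤ, ∀ p : ℝ×ℝ,
      p ∈ (fun p : ℝ×ℝ => (p.1 + (k:ℝ)*Real.pi, p.2)) '' P →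
      (k:ℝ)*Real.pi ≤ p.1 ∧ p.1 ≤ (k:ℝ)*Real.pi + Real.pi ∧ p.2 ∈ Ioo (-(1/4):ℝ) (1/4) := by
    rintro k p ⟨q, hq, rfl⟩
    obtain ⟨hq1, hq2⟩ := hPsub hq
    simp only [mem_Icc] at hq1
    exact ⟨by simp; linarith [hq1.1], by simp; linarith [hq1.2], hq2⟩
  -- Lemma A: points of Ptil with first coordinate kπ are junction points
  have hA : ∀ p ∈ Ptil, ∀ k : ℤ, p.1 = (k:ℝ)*Real.pi → p = ((k:ℝ)*Real.pi, (0:ℝ)) := by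
    intro p hp k hpk
    rw [hPtil] at hp
    obtain ⟨m, hm⟩ := mem_iUnion.1 hp
    obtain ⟨q, hq, rfl⟩ := hm
    obtain ⟨hq1, _⟩ := hPsub hq
    simp only [mem_Icc] at hq1
    simp only at hpk
    have hq1' : q.1 = ((k - m : ℤ):ℝ) * Real.pi := by push_cast; linarith
    have hj0 : (0:ℝ) ≤ ((k - m : ℤ):ℝ) := by
      by_contra h
      push_neg at h
      nlinarith [hq1.1, hq1']
    have hj1 : ((k - m : ℤ):ℝ) ≤ 1 := by
      by_contra h
      push_neg at h
      nlinarith [hq1.2, hq1']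
    have hj0' : (0:ℤ) ≤ k - m := by exact_mod_cast hj0
    have hj1' : (k - m : ℤ) ≤ 1 := by exact_mod_cast hj1
    rcases (by omega : k - m = 0 ∨ k - m = 1) with h | h
    · have hkm : k = m := by omega
      have hq0 : q.1 = 0 := by rw [hq1', h]; simp
      have : q ∈ ({((0:ℝ),(0:ℝ))} : Set (ℝ×ℝ)) := by rw [← hP0]; exact ⟨hq, hq0⟩
      rw [mem_singleton_iff] at this
      rw [this, hkm]
      simp
    · have hkm : (k:ℝ) = (m:ℝ) + 1 := by exact_mod_cast (by omega : k = m + 1)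
      have hq0 : q.1 = Real.pi := by rw [hq1', h]; simp
      have : q ∈ ({((Real.pi:ℝ),(0:ℝ))} : Set (ℝ×ℝ)) := by rw [← hPπ]; exact ⟨hq, hq0⟩
      rw [mem_singleton_iff] at this
      rw [this]
      have : Real.pi + (m:ℝ) * Real.pi = (k:ℝ) * Real.pi := by rw [hkm]; ring
      rw [Prod.mk.injEq]
      exact ⟨this, rfl⟩
  -- Lemma B: points of Ptil strictly between kπ and (k+1)π lie in the k-th translate
  have hB : ∀ p ∈ Ptil, ∀ k : ℤ, (k:ℝ)*Real.pi < p.1 → p.1 < (k:ℝ)*Real.pi + Real.pi →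
      p ∈ (fun p : ℝ×ℝ => (p.1 + (k:ℝ)*Real.pi, p.2)) '' P := by
    intro p hp k h1 h2
    rw [hPtil] at hp
    obtain ⟨m, hm⟩ := mem_iUnion.1 hp
    obtain ⟨hb1, hb2, _⟩ := hbounds m p hm
    have hmk : m = k := by
      have e1 : (m:ℝ) < (k:ℝ) + 1 := by
        have : (m:ℝ) * Real.pi < ((k:ℝ)+1) * Real.pi := by nlinarith
        exact lt_of_mul_lt_mul_right (by linarith) (le_of_lt hπ)
      have e2 : (k:ℝ) < (m:ℝ) + 1 := by
        have : (k:ℝ) * Real.pi < ((m:ℝ)+1) * Real.pi := by nlinarith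
        exact lt_of_mul_lt_mul_right (by linarith) (le_of_lt hπ)
      have e1' : (m:ℤ) < k + 1 := by exact_mod_cast (by push_cast; linarith : (m:ℝ) < ((k+1:ℤ):ℝ))
      have e2' : (k:ℤ) < m + 1 := by exact_mod_cast (by push_cast; linarith : (k:ℝ) < ((m+1:ℤ):ℝ))
      omega
    rw [hmk] at hm
    exact hm
  refine ⟨?_, ?_, ?_, h0til, ?_⟩
  · -- subset
    intro p hp
    rw [hPtil] at hp
    obtain ⟨m, hm⟩ := mem_iUnion.1 hp
    obtain ⟨_, _, h3⟩ := hbounds m p hm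
    exact ⟨trivial, h3⟩
  · -- unbounded
    intro hb
    obtain ⟨C, hC⟩ := isBounded_iff_forall_norm_le.1 hb
    set k : ℤ := ⌈C / Real.pi⌉ + 1 with hk
    have hkC : C < (k:ℝ) * Real.pi := by
      have h1 : C / Real.pi ≤ (⌈C/Real.pi⌉:ℝ) := Int.le_ceil _
      have h2 : C / Real.pi < (k:ℝ) := by rw [hk]; push_cast; linarith
      exact (div_lt_iff₀ hπ).1 h2
    have hle := hC _ (hjunc k)
    have hge : |(k:ℝ) * Real.pi| ≤ ‖((((k:ℝ)*Real.pi, (0:ℝ))) : ℝ×ℝ)‖ := by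
      rw [Prod.norm_def]
      exact le_max_of_le_left (le_of_eq (Real.norm_eq_abs _).symm)
    have := le_trans (le_abs_self ((k:ℝ)*Real.pi)) (le_trans hge hle)
    linarith
  · -- connected
    refine ⟨⟨_, h0til⟩, ?_⟩
    rw [hPtil]
    apply IsPreconnected.iUnion_of_chain
    · intro k
      exact hPconn.2.image _ (by fun_prop)
    · intro k
      refine ⟨((k:ℝ)*Real.pi + Real.pi, 0), ⟨(Real.pi, 0), hπP, by simp [add_comm]⟩,
        ⟨(0,0), h00, ?_⟩⟩
      show ((0:ℝ) + ((Order.succ k : ℤ):ℝ) * Real.pi, (0:ℝ)) = ((k:ℝ)*Real.pi + Real.pi, 0)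
      have h1 : (Order.succ k : ℤ) = k + 1 := rfl
      rw [h1]
      have h2 : (0:ℝ) + ((k + 1 : ℤ):ℝ) * Real.pi = (k:ℝ) * Real.pi + Real.pi := by
        push_cast; ring
      rw [Prod.mk.injEq]
      exact ⟨h2, rfl⟩
  · -- no nontrivial paths
    intro γ hγc hγmem s t
    haveI : PreconnectedSpace (Set.Icc (0:ℝ) 1) := Subtype.preconnectedSpace isPreconnected_Icc
    by_cases hcase : ∀ u, ∃ m : ℤ, (γ u).1 = (m:ℝ) * Real.pi
    · -- all points are junction points
      have hγj : ∀ u, γ u = ((γ u).1, 0) := by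
        intro u
        obtain ⟨m, hm⟩ := hcase u
        rw [hA _ (hγmem u) m hm]
      have key : ∀ a b : Set.Icc (0:ℝ) 1, (γ a).1 < (γ b).1 → False := by
        intro a b hab
        obtain ⟨m, hm⟩ := hcase a
        obtain ⟨m', hm'⟩ := hcase b
        have hmm' : (m:ℤ) < m' := by
          have : (m:ℝ) * Real.pi < (m':ℝ) * Real.pi := by rw [← hm, ← hm']; exact hab
          have : (m:ℝ) < (m':ℝ) := lt_of_mul_lt_mul_right (by linarith) (le_of_lt hπ)
          exact_mod_cast this
        have hvmem : (m:ℝ) * Real.pi + Real.pi / 2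
            ∈ Icc ((fun u => (γ u).1) a) ((fun u => (γ u).1) b) := by
          constructor
          · simp only [hm]; linarith
          · simp only [hm']
            have : ((m:ℝ) + 1) * Real.pi ≤ (m':ℝ) * Real.pi := by
              have : (m:ℝ) + 1 ≤ (m':ℝ) := by exact_mod_cast hmm'
              nlinarith
            linarith
        obtain ⟨u, hu⟩ := intermediate_value_univ a b (continuous_fst.comp hγc) hvmem
        obtain ⟨m'', hm''⟩ := hcase u
        have : (2 * (m'' - m) : ℝ) * Real.pi = Real.pi := by
          have h5 : (m'':ℝ) * Real.pi = (m:ℝ) * Real.pi + Real.pi / 2 := by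
            rw [← hm'']; exact hu
          linarith
        have h2 : (2 * (m'' - m) : ℝ) = 1 := by
          have := mul_right_cancel₀ (ne_of_gt hπ) (by linarith [this] : (2 * (m'' - m) : ℝ) * Real.pi = 1 * Real.pi)
          exact this
        have h2' : (2 * (m'' - m) : ℤ) = 1 := by exact_mod_cast h2
        omega
      rcases lt_trichotomy ((γ s).1) ((γ t).1) with h | h | h
      · exact absurd h (fun h => key s t h)
      · rw [hγj s, hγj t, h]
      · exact absurd h (fun h => key t s h)
    · push_neg at hcase
      obtain ⟨u0, hu0⟩ := hcase
      set x : ℝ := (γ u0).1 with hx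
      set k : ℤ := ⌊x / Real.pi⌋ with hk
      have hk1 : (k:ℝ) * Real.pi ≤ x := by
        have := Int.floor_le (x / Real.pi)
        calc (k:ℝ) * Real.pi ≤ (x / Real.pi) * Real.pi := by nlinarith
          _ = x := by field_simp
      have hk1' : (k:ℝ) * Real.pi < x := lt_of_le_of_ne hk1 (Ne.symm (hu0 k))
      have hk2 : x < (k:ℝ) * Real.pi + Real.pi := by
        have h1 := Int.lt_floor_add_one (x / Real.pi)
        have h2 : x / Real.pi < (k:ℝ) + 1 := by
          rw [hk]; exact h1
        have h3 := (div_lt_iff₀ hπ).1 h2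
        linarith
      set σ : Set.Icc (0:ℝ) 1 → ℝ × ℝ := fun u =>
        if (γ u).1 ≤ (k:ℝ) * Real.pi then ((k:ℝ) * Real.pi, 0)
        else if (k:ℝ) * Real.pi + Real.pi ≤ (γ u).1 then ((k:ℝ) * Real.pi + Real.pi, 0)
        else γ u with hσ
      have hbd2 : ∀ u : Set.Icc (0:ℝ) 1, (k:ℝ) * Real.pi + Real.pi = (γ u).1 →
          γ u = ((k:ℝ) * Real.pi + Real.pi, 0) := by
        intro u hu
        have : (γ u).1 = ((k+1:ℤ):ℝ) * Real.pi := by push_cast; linarith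
        have := hA _ (hγmem u) (k+1) this
        rw [this]
        push_cast
        simp only [Prod.mk.injEq]
        exact ⟨by ring, trivial⟩
      have hσcont : Continuous σ := by
        rw [hσ]
        refine Continuous.if_le continuous_const ?_ (continuous_fst.comp hγc) continuous_const ?_
        · refine Continuous.if_le continuous_const hγc continuous_const
            (continuous_fst.comp hγc) ?_
          intro u hu
          exact (hbd2 u hu).symm
        · intro u hu
          have hgu : γ u = ((k:ℝ) * Real.pi, 0) := hA _ (hγmem u) k hu
          rw [if_neg (by rw [hgu]; simp; linarith), hgu]
      have hσmem : ∀ u, σ u ∈ (fun p : ℝ×ℝ => (p.1 + (k:ℝ)*Real.pi, p.2)) '' P := by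
        intro u
        rw [hσ]
        simp only
        split_ifs with h1 h2
        · refine ⟨(0,0), h00, ?_⟩
          simp
        · refine ⟨(Real.pi, 0), hπP, ?_⟩
          simp only [Prod.mk.injEq]
          exact ⟨by ring, trivial⟩
        · exact hB _ (hγmem u) k (lt_of_not_ge h1) (lt_of_not_ge h2)
      set ρ : Set.Icc (0:ℝ) 1 → ℝ × ℝ := fun u => ((σ u).1 - (k:ℝ)*Real.pi, (σ u).2) with hρ
      have hρmem : ∀ u, ρ u ∈ P := by
        intro u
        obtain ⟨q, hq, he⟩ := hσmem u
        have : ρ u = q := by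
          rw [hρ]
          simp only [← he]
          simp
        rw [this]
        exact hq
      have hρc : Continuous ρ := by
        rw [hρ]
        exact ((continuous_fst.comp hσcont).sub continuous_const).prodMk
          (continuous_snd.comp hσcont)
      have hρconst := hPnopath ρ hρc hρmem
      have hσconst : ∀ a b, σ a = σ b := by
        intro a b
        have h := hρconst a b
        rw [hρ] at h
        simp only [Prod.mk.injEq] at h
        have h1 : (σ a).1 = (σ b).1 := by linarith [h.1]
        exact Prod.ext h1 h.2
      have hσu0 : σ u0 = γ u0 := by
        rw [hσ]
        simp only
        rw [if_neg (not_le.2 hk1'), if_neg (not_le.2 hk2)]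
      have hfix : ∀ u, γ u = γ u0 := by
        intro u
        have h := hσconst u u0
        rw [hσu0] at h
        rw [hσ] at h
        simp only at h
        split_ifs at h with h1 h2
        · exfalso
          have : x = (k:ℝ) * Real.pi := by rw [hx, ← h]
          exact absurd this (hu0 k)
        · exfalso
          have : x = (k:ℝ) * Real.pi + Real.pi := by rw [hx, ← h]
          linarith
        · exact h
      rw [hfix s, hfix t]
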